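/- For each t ≥ 1 and every z = (w, x, y) with w ∈ 𝒲, x ∈ X, y ∈ 𝒴, the AADMM iterates satisfy Q(z; z_{t+1}^ag) − (1−α_t)Q(z; z_t^ag) ≤ α_t [ ⟨∇G(x_t^md), x_{t+1} − x⟩ + F(w_{t+1}) − F(w) + (L_G α_t/2)‖x_{t+1} − x_t‖² − ⟨y, Bw_{t+1} − Kx_{t+1} − b⟩ + ⟨y_{t+1}, Bw − Kx − b⟩ ]. -/
import Mathlib


open RealInnerProductSpace

lemma grad_ineq_aux {𝒳 : Type*} [NormedAddCommGroup 𝒳] [InnerProductSpace ℝ 𝒳] [CompleteSpace 𝒳]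
    (G : 𝒳 → ℝ) (G' : 𝒳 → 𝒳) (hGgrad : ∀ p, HasGradientAt G (G' p) p)
    (hGconv : ConvexOn ℝ Set.univ G) (p u : 𝒳) :
    G p + ⟪G' p, u - p⟫ ≤ G u := by
  set c : ℝ →ᵃ[ℝ] 𝒳 := AffineMap.lineMap p u with hc
  have hcd : HasDerivAt (fun s : ℝ => c s) (u - p) 0 := by
    have h1 : HasDerivAt (fun s : ℝ => s • (u - p)) ((1 : ℝ) • (u - p)) 0 :=
      (hasDerivAt_id 0).smul_const (u - p)
    have h2 := (h1.add_const p)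
    refine h2.congr_deriv (by simp) |>.congr_of_eventuallyEq ?_
    · filter_upwards with s
      simp [hc, AffineMap.lineMap_apply_module]
      module
  have hG : HasFDerivAt G ((innerSL ℝ) (G' p)) p := (hGgrad p).hasFDerivAt
  have hc0 : c 0 = p := by simp [hc]
  have hgd : HasDerivAt (G ∘ fun s : ℝ => c s) ⟪G' p, u - p⟫ 0 := by
    have hG2 : HasFDerivAt G ((innerSL ℝ) (G' p)) (c 0) := by rw [hc0]; exact hG
    simpa using hG2.comp_hasDerivAt 0 hcd
  have hconv : ConvexOn ℝ Set.univ (G ∘ fun s : ℝ => c s) := by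
    have := hGconv.comp_affineMap c
    simpa using this
  have hs := hconv.le_slope_of_hasDerivAt (Set.mem_univ 0) (Set.mem_univ 1) one_pos hgd
  have : slope (G ∘ fun s : ℝ => c s) 0 1 = G u - G p := by
    simp [slope, hc0, Function.comp, hc]
  rw [this] at hs
  linarith

theorem stmt_5
    {𝒲 𝒳 𝒴 : Type*}
    [NormedAddCommGroup 𝒲] [InnerProductSpace ℝ 𝒲] [FiniteDimensional ℝ 𝒲]
    [NormedAddCommGroup 𝒳] [InnerProductSpace ℝ 𝒳] [FiniteDimensional ℝ 𝒳]
    [NormedAddCommGroup 𝒴] [InnerProductSpace ℝ 𝒴] [FiniteDimensional ℝ 𝒴]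
    (X : Set 𝒳) (hXclosed : IsClosed X) (hXconv : Convex ℝ X)
    (G : 𝒳 → ℝ) (G' : 𝒳 → 𝒳) (hGgrad : ∀ p, HasGradientAt G (G' p) p)
    (hGconv : ConvexOn ℝ Set.univ G)
    (L_G : ℝ) (hLG : 0 < L_G)
    (hGsmooth : ∀ x₁ ∈ X, ∀ x₂ ∈ X,
      G x₂ - G x₁ - ⟪G' x₁, x₂ - x₁⟫ ≤ L_G / 2 * ‖x₂ - x₁‖ ^ 2)
    (F : 𝒲 → ℝ) (hFconv : ConvexOn ℝ Set.univ F) (hFlsc : LowerSemicontinuous F)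
    (K : 𝒳 →L[ℝ] 𝒴) (B : 𝒲 →L[ℝ] 𝒴) (b : 𝒴)
    (χ : ℝ) (hχ : χ = 0 ∨ χ = 1)
    (α η θ τ ρ : ℕ → ℝ)
    (hα : ∀ t, 1 ≤ t → 0 < α t ∧ α t ≤ 1)
    (hη : ∀ t, 1 ≤ t → 0 < η t) (hθ : ∀ t, 1 ≤ t → 0 ≤ θ t)
    (hτ : ∀ t, 1 ≤ t → 0 < τ t) (hρ : ∀ t, 1 ≤ t → 0 < ρ t)
    (x xag xmd : ℕ → 𝒳) (w wag : ℕ → 𝒲) (y yag : ℕ → 𝒴)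
    (hx1 : x 1 ∈ X) (hw1 : B (w 1) = K (x 1) + b) (hy1 : y 1 = 0)
    (hxag1 : xag 1 = x 1) (hwag1 : wag 1 = w 1) (hyag1 : yag 1 = y 1)
    (hxmd : ∀ t, 1 ≤ t → xmd t = (1 - α t) • xag t + α t • x t)
    (hxmem : ∀ t, 1 ≤ t → x (t + 1) ∈ X)
    (hxstep : ∀ t, 1 ≤ t → ∀ u ∈ X,
      ⟪G' (xmd t), x (t + 1)⟫ - χ * θ t * ⟪B (w t) - K (x t) - b, K (x (t + 1))⟫
        + (1 - χ) * θ t / 2 * ‖B (w t) - K (x (t + 1)) - b‖ ^ 2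
        + ⟪y t, K (x (t + 1))⟫ + η t / 2 * ‖x (t + 1) - x t‖ ^ 2
      ≤ ⟪G' (xmd t), u⟫ - χ * θ t * ⟪B (w t) - K (x t) - b, K u⟫
        + (1 - χ) * θ t / 2 * ‖B (w t) - K u - b‖ ^ 2
        + ⟪y t, K u⟫ + η t / 2 * ‖u - x t‖ ^ 2)
    (hxagstep : ∀ t, 1 ≤ t → xag (t + 1) = (1 - α t) • xag t + α t • x (t + 1))
    (hwstep : ∀ t, 1 ≤ t → ∀ u : 𝒲,
      F (w (t + 1)) - ⟪y t, B (w (t + 1))⟫ + τ t / 2 * ‖B (w (t + 1)) - K (x (t + 1)) - b‖ ^ 2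
      ≤ F u - ⟪y t, B u⟫ + τ t / 2 * ‖B u - K (x (t + 1)) - b‖ ^ 2)
    (hwagstep : ∀ t, 1 ≤ t → wag (t + 1) = (1 - α t) • wag t + α t • w (t + 1))
    (hystep : ∀ t, 1 ≤ t → y (t + 1) = y t - ρ t • (B (w (t + 1)) - K (x (t + 1)) - b))
    (hyagstep : ∀ t, 1 ≤ t → yag (t + 1) = (1 - α t) • yag t + α t • y (t + 1))
    :
    ∀ t, 1 ≤ t → ∀ wv : 𝒲, ∀ xv ∈ X, ∀ yv : 𝒴,
      ((G (xag (t + 1)) + F (wag (t + 1)) - ⟪yv, B (wag (t + 1)) - K (xag (t + 1)) - b⟫)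
          - (G xv + F wv - ⟪yag (t + 1), B wv - K xv - b⟫))
        - (1 - α t) * ((G (xag t) + F (wag t) - ⟪yv, B (wag t) - K (xag t) - b⟫)
          - (G xv + F wv - ⟪yag t, B wv - K xv - b⟫))
      ≤ α t * (⟪G' (xmd t), x (t + 1) - xv⟫ + F (w (t + 1)) - F wv
          + L_G * α t / 2 * ‖x (t + 1) - x t‖ ^ 2
          - ⟪yv, B (w (t + 1)) - K (x (t + 1)) - b⟫ + ⟪y (t + 1), B wv - K xv - b⟫) := by
  have hxX : ∀ s, 1 ≤ s → x s ∈ X := by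
    intro s hs
    match s, hs with
    | 1, _ => exact hx1
    | (n+2), _ => exact hxmem (n+1) (by omega)
  have hxagX : ∀ s, 1 ≤ s → xag s ∈ X := by
    intro s hs
    induction s, hs using Nat.le_induction with
    | base => rw [hxag1]; exact hx1
    | succ n hn ih =>
      obtain ⟨h0, h1⟩ := hα n hn
      rw [hxagstep n hn]
      exact hXconv ih (hxmem n hn) (by linarith) h0.le (by ring)
  intro t ht wv xv hxv yv
  obtain ⟨ha0, ha1⟩ := hα t ht
  have hxmdX : xmd t ∈ X := by
    rw [hxmd t ht]
    exact hXconv (hxagX t ht) (hxX t ht) (by linarith) ha0.le (by ring)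
  have hxag1X : xag (t + 1) ∈ X := by
    rw [hxagstep t ht]
    exact hXconv (hxagX t ht) (hxmem t ht) (by linarith) ha0.le (by ring)
  have hF : F (wag (t + 1)) ≤ (1 - α t) * F (wag t) + α t * F (w (t + 1)) := by
    rw [hwagstep t ht]
    exact hFconv.2 (Set.mem_univ _) (Set.mem_univ _) (by linarith) ha0.le (by ring)
  have hG2 : G (xag (t + 1)) ≤ (1 - α t) * G (xag t) + α t * G xv
      + α t * ⟪G' (xmd t), x (t + 1) - xv⟫ + L_G * (α t) ^ 2 / 2 * ‖x (t + 1) - x t‖ ^ 2 := by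
    have hdiff : xag (t + 1) - xmd t = α t • (x (t + 1) - x t) := by
      rw [hxagstep t ht, hxmd t ht]; module
    have hsm := hGsmooth (xmd t) hxmdX (xag (t + 1)) hxag1X
    rw [hdiff, real_inner_smul_right] at hsm
    have e2 : ‖α t • (x (t + 1) - x t)‖ ^ 2 = (α t) ^ 2 * ‖x (t + 1) - x t‖ ^ 2 := by
      rw [norm_smul, mul_pow]
      simp [Real.norm_eq_abs, sq_abs]
    rw [e2] at hsm
    have hg1 := grad_ineq_aux G G' hGgrad hGconv (xmd t) (xag t)
    have hg2 := grad_ineq_aux G G' hGgrad hGconv (xmd t) xv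
    have hm1 : (1 - α t) * (G (xmd t) + ⟪G' (xmd t), xag t - xmd t⟫)
        ≤ (1 - α t) * G (xag t) := mul_le_mul_of_nonneg_left hg1 (by linarith)
    have hm2 : α t * (G (xmd t) + ⟪G' (xmd t), xv - xmd t⟫)
        ≤ α t * G xv := mul_le_mul_of_nonneg_left hg2 ha0.le
    have hinner : (1 - α t) * ⟪G' (xmd t), xag t - xmd t⟫ + α t * ⟪G' (xmd t), xv - xmd t⟫
        = α t * ⟪G' (xmd t), xv - x t⟫ := by
      rw [← real_inner_smul_right, ← real_inner_smul_right, ← real_inner_smul_right,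
        ← inner_add_right]
      congr 1
      rw [hxmd t ht]; module
    have hsplit : α t * ⟪G' (xmd t), x (t + 1) - x t⟫ - α t * ⟪G' (xmd t), xv - x t⟫
        = α t * ⟪G' (xmd t), x (t + 1) - xv⟫ := by
      have h : x (t + 1) - xv = (x (t + 1) - x t) - (xv - x t) := by abel
      rw [h]; simp only [inner_sub_right]; ring
    nlinarith [hsm, hm1, hm2, hinner, hsplit]
  have hCy : ⟪yv, B (wag (t + 1)) - K (xag (t + 1)) - b⟫
      = (1 - α t) * ⟪yv, B (wag t) - K (xag t) - b⟫
        + α t * ⟪yv, B (w (t + 1)) - K (x (t + 1)) - b⟫ := by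
    rw [← real_inner_smul_right, ← real_inner_smul_right, ← inner_add_right]
    congr 1
    rw [hwagstep t ht, hxagstep t ht, map_add, map_add, map_smul, map_smul, map_smul, map_smul]
    module
  have hDy : ⟪yag (t + 1), B wv - K xv - b⟫
      = (1 - α t) * ⟪yag t, B wv - K xv - b⟫ + α t * ⟪y (t + 1), B wv - K xv - b⟫ := by
    rw [hyagstep t ht]
    rw [inner_add_left, real_inner_smul_left, real_inner_smul_left]
  rw [hCy, hDy]
  nlinarith [hF, hG2]
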